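/- For every ε > 0 there is a constant C₀ such that for all C ≥ C₀ and n ≥ 2: if G is a graph on N = C·n·(n-1) vertices with minimum degree δ(G) ≥ (1+ε)·N/2, then G contains a spanning subdivision of the complete graph K_n. -/

import Mathlib

set_option linter.unusedSectionVars false
set_option maxHeartbeats 1600000

open SimpleGraph Finset

section Aux
variable {V : Type} [Fintype V] [DecidableEq V] {G : SimpleGraph V}
/-- Split a walk at a dart. -/
lemma walk_split_at_dart : ∀ {u v : V} (p : G.Walk u v) (d : G.Dart), d ∈ p.darts →
    ∃ (p1 : G.Walk u d.fst) (p2 : G.Walk d.snd v),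
      p = p1.append (SimpleGraph.Walk.cons d.adj p2) := by
  intro u v p
  induction p with
  | nil => intro d hd; simp [SimpleGraph.Walk.darts] at hd
  | @cons a b c h q ih =>
    intro d hd
    rw [SimpleGraph.Walk.darts_cons, List.mem_cons] at hd
    rcases hd with rfl | hd
    · exact ⟨SimpleGraph.Walk.nil, q, rfl⟩
    · obtain ⟨p1, p2, hp⟩ := ih d hd
      exact ⟨SimpleGraph.Walk.cons h p1, p2, by rw [hp, SimpleGraph.Walk.cons_append]⟩

/-- There exists a path of maximal length. -/
lemma exists_max_path [Nonempty V] (G : SimpleGraph V) :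
    ∃ (a b : V) (p : G.Walk a b), p.IsPath ∧
      ∀ (x y : V) (q : G.Walk x y), q.IsPath → q.length ≤ p.length := by
  classical
  set P : ℕ → Prop := fun k => ∃ (a b : V) (p : G.Walk a b), p.IsPath ∧ p.length = k with hP
  have h0 : P 0 := ⟨Classical.arbitrary V, Classical.arbitrary V, SimpleGraph.Walk.nil,
    SimpleGraph.Walk.IsPath.nil, rfl⟩
  have hbd : ∀ k, P k → k ≤ Fintype.card V := by
    rintro k ⟨a, b, p, hp, rfl⟩
    exact hp.length_lt.le
  obtain ⟨a, b, p, hp, hlen⟩ := Nat.findGreatest_spec (P := P) (Nat.zero_le _) h0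
  refine ⟨a, b, p, hp, fun x y q hq => ?_⟩
  rw [hlen]
  exact Nat.le_findGreatest (hbd _ ⟨x, y, q, hq, rfl⟩) ⟨x, y, q, hq, rfl⟩

lemma walk_cons_of_length_pos {u : V} (c : G.Walk u u) (h : 0 < c.length) :
    ∃ (x : V) (ha : G.Adj u x) (t : G.Walk x u), c = SimpleGraph.Walk.cons ha t := by
  cases c with
  | nil => simp at h
  | cons ha t => exact ⟨_, ha, t, rfl⟩


open SimpleGraph.Walk in
/-- Dirac-type: a graph with `2δ ≥ n + 2` has a Hamiltonian path whose endpoints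
are adjacent. -/
lemma exists_ham_path_adj (G : SimpleGraph V) [DecidableRel G.Adj]
    (hM : 3 ≤ Fintype.card V)
    (hdeg : ∀ v : V, Fintype.card V + 2 ≤ 2 * G.degree v) :
    ∃ (a z : V) (q : G.Walk a z), q.IsPath ∧ (∀ v, v ∈ q.support) ∧ G.Adj z a := by
  classical
  have : Nonempty V := Fintype.card_pos_iff.mp (by omega)
  obtain ⟨a, b, p, hp, hmax⟩ := exists_max_path G
  -- endpoints' neighborhoods lie on the path
  have hnbra : ∀ w, G.Adj a w → w ∈ p.support := by
    intro w hw
    by_contra hws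
    have hq : (Walk.cons hw.symm p).IsPath := hp.cons hws
    have := hmax _ _ _ hq
    simp at this
  have hnbrb : ∀ w, G.Adj b w → w ∈ p.support := by
    intro w hw
    by_contra hws
    have hq : (Walk.cons hw.symm p.reverse).IsPath := hp.reverse.cons (by simpa using hws)
    have := hmax _ _ _ hq
    simp at this
  -- pigeonhole on darts
  have hnd : p.darts.Nodup := by
    have h1 : (p.darts.map (·.snd)).Nodup := by
      rw [Walk.map_snd_darts]; exact hp.support_nodup.tail
    exact List.Nodup.of_map _ h1
  set D : Finset G.Dart := p.darts.toFinset with hD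
  have hDcard : D.card = p.length := by
    rw [hD, List.toFinset_card_of_nodup hnd, Walk.length_darts]
  set Sa : Finset G.Dart := D.filter (fun d => G.Adj a d.snd) with hSa
  set Sb : Finset G.Dart := D.filter (fun d => G.Adj b d.fst) with hSb
  have hSacard : Sa.card = G.degree a := by
    rw [← card_neighborFinset_eq_degree]
    apply Finset.card_bij (fun d _ => d.snd)
    · intro d hd
      rw [hSa, Finset.mem_filter] at hd
      simpa using hd.2
    · intro d1 h1 d2 h2 heq
      rw [hSa, Finset.mem_filter, hD, List.mem_toFinset] at h1 h2
      have hnodup : (p.darts.map (·.snd)).Nodup := by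
        rw [Walk.map_snd_darts]; exact hp.support_nodup.tail
      exact List.inj_on_of_nodup_map hnodup h1.1 h2.1 heq
    · intro w hw
      rw [mem_neighborFinset] at hw
      have hws : w ∈ p.support := hnbra w hw
      have hwa : w ≠ a := fun h => G.irrefl (h ▸ hw)
      have : w ∈ p.support.tail := by
        rw [p.support_eq_cons] at hws
        rcases List.mem_cons.mp hws with rfl | h
        · exact absurd rfl hwa
        · exact h
      rw [← Walk.map_snd_darts] at this
      obtain ⟨d, hd, rfl⟩ := List.mem_map.mp this
      exact ⟨d, by rw [hSa, Finset.mem_filter, hD, List.mem_toFinset]; exact ⟨hd, hw⟩, rfl⟩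
  have hSbcard : Sb.card = G.degree b := by
    rw [← card_neighborFinset_eq_degree]
    apply Finset.card_bij (fun d _ => d.fst)
    · intro d hd
      rw [hSb, Finset.mem_filter] at hd
      simpa using hd.2
    · intro d1 h1 d2 h2 heq
      rw [hSb, Finset.mem_filter, hD, List.mem_toFinset] at h1 h2
      have hnodup : (p.darts.map (·.fst)).Nodup := by
        rw [Walk.map_fst_darts]; exact (List.dropLast_sublist _).nodup hp.support_nodup
      exact List.inj_on_of_nodup_map hnodup h1.1 h2.1 heq
    · intro w hw
      rw [mem_neighborFinset] at hw
      have hws : w ∈ p.support := hnbrb w hw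
      have hwb : w ≠ b := fun h => G.irrefl (h ▸ hw)
      have hlast : p.support.getLast (p.support_ne_nil) = b := p.getLast_support
      have : w ∈ p.support.dropLast := by
        have hsplit := List.dropLast_append_getLast (p.support_ne_nil)
        rw [← hsplit] at hws
        rcases List.mem_append.mp hws with h | h
        · exact h
        · rw [hlast] at h; simp at h; exact absurd h hwb
      rw [← Walk.map_fst_darts] at this
      obtain ⟨d, hd, rfl⟩ := List.mem_map.mp this
      exact ⟨d, by rw [hSb, Finset.mem_filter, hD, List.mem_toFinset]; exact ⟨hd, hw⟩, rfl⟩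
  have hUsub : Sa ∪ Sb ⊆ D := Finset.union_subset (Finset.filter_subset _ _) (Finset.filter_subset _ _)
  have hplen : p.length < Fintype.card V := hp.length_lt
  have hinter : (Sa ∩ Sb).Nonempty := by
    rw [← Finset.card_pos]
    have h1 : (Sa ∩ Sb).card + (Sa ∪ Sb).card = Sa.card + Sb.card :=
      Finset.card_inter_add_card_union Sa Sb
    have h2 : (Sa ∪ Sb).card ≤ D.card := Finset.card_le_card hUsub
    have h3 : Fintype.card V + 2 ≤ Sa.card + Sb.card := by
      rw [hSacard, hSbcard]
      have := hdeg a
      have := hdeg b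
      omega
    omega
  obtain ⟨d, hd⟩ := hinter
  rw [Finset.mem_inter, hSa, hSb, Finset.mem_filter, Finset.mem_filter, hD,
    List.mem_toFinset] at hd
  obtain ⟨⟨hdm, hadjas⟩, -, hadjbf⟩ := hd
  -- surgery: build a path `q'` from `a` to `d.snd` with the same support as `p`
  obtain ⟨p1, p2, hsplit⟩ := walk_split_at_dart p d hdm
  set q' : G.Walk a d.snd := p1.append (Walk.cons hadjbf.symm p2.reverse) with hq'
  have hq'supp : q'.support.Perm p.support := by
    rw [hq', hsplit, Walk.support_append, Walk.support_append]
    simp only [Walk.support_cons, List.tail_cons, Walk.support_reverse]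
    exact (List.reverse_perm p2.support).append_left p1.support
  have hq'path : q'.IsPath := by
    rw [isPath_def]
    exact hq'supp.nodup_iff.mpr hp.support_nodup
  have hq'len : q'.length = p.length := by
    have h1 := q'.length_support
    have h2 := p.length_support
    have := hq'supp.length_eq
    omega
  have hadjza : G.Adj d.snd a := hadjas.symm
  -- if p is spanning we are done; otherwise derive a contradiction
  by_cases hspan : ∀ v : V, v ∈ p.support
  · exact ⟨a, d.snd, q', hq'path, fun v => hq'supp.mem_iff.mpr (hspan v), hadjza⟩
  exfalso
  push_neg at hspan
  obtain ⟨w, hw⟩ := hspan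
  -- find w' ∉ support adjacent to y ∈ support
  have hconn : ∃ w' y, w' ∉ p.support ∧ y ∈ p.support ∧ G.Adj y w' := by
    by_cases hadj : G.Adj a w
    · exact ⟨w, a, hw, p.start_mem_support, hadj⟩
    · have hcn : (G.neighborFinset w ∩ G.neighborFinset a).Nonempty := by
        rw [← Finset.card_pos]
        have h1 : (G.neighborFinset w ∩ G.neighborFinset a).card
            + (G.neighborFinset w ∪ G.neighborFinset a).card
            = G.degree w + G.degree a := by
          rw [Finset.card_inter_add_card_union, card_neighborFinset_eq_degree,
            card_neighborFinset_eq_degree]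
        have h2 : (G.neighborFinset w ∪ G.neighborFinset a).card ≤ Fintype.card V :=
          Finset.card_le_univ _
        have := hdeg w; have := hdeg a
        omega
      obtain ⟨z, hz⟩ := hcn
      rw [Finset.mem_inter, mem_neighborFinset, mem_neighborFinset] at hz
      by_cases hzs : z ∈ p.support
      · exact ⟨w, z, hw, hzs, hz.1.symm⟩
      · exact ⟨z, a, hzs, p.start_mem_support, hz.2⟩
  obtain ⟨w', y, hw's, hys, hadjyw'⟩ := hconn
  -- close up q' into a closed walk, rotate to y, remove an edge, extend by w'
  set c : G.Walk a a := q'.concat hadjza with hc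
  have hyc : y ∈ c.support := by
    rw [hc, Walk.support_concat]
    exact List.mem_append_left _ (hq'supp.mem_iff.mpr hys)
  set c' : G.Walk y y := c.rotate y hyc with hc'
  have hctail : (c.support.tail : List V).Perm q'.support := by
    rw [hc, Walk.support_concat, q'.support_eq_cons]
    simp only [List.cons_append, List.tail_cons]
    have hpc : (q'.support.tail ++ [a]).Perm ([a] ++ q'.support.tail) :=
      List.perm_append_comm
    simpa using hpc
  have hc'tail : (c'.support.tail : List V).Perm p.support := by
    have hrot := Walk.support_rotate c y hyc
    exact (hrot.perm.trans hctail).trans hq'supp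
  have hc'nn : c'.length = p.length + 1 := by
    have h1 := c'.length_support
    have h2 := c.length_support
    have h3 : c.length = q'.length + 1 := by rw [hc, Walk.length_concat]
    have h4 := (Walk.support_rotate c y hyc).perm.length_eq
    have h5 := c.support_eq_cons
    have h6 := c'.support_eq_cons
    have h7 : c'.support.length = c.support.length := by
      rw [h5, h6]; simp only [List.length_cons]; exact congrArg (· + 1) h4
    omega
  obtain ⟨x, hadjyx, t, hct⟩ := walk_cons_of_length_pos c' (by omega)
  · have htsupp : t.support.Perm p.support := by
      have : t.support = c'.support.tail := by rw [hct]; simp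
      rw [this]
      exact hc'tail
    have htpath : t.IsPath := by
      rw [isPath_def]
      exact htsupp.nodup_iff.mpr hp.support_nodup
    have hw't : w' ∉ t.support := fun h => hw's (htsupp.mem_iff.mp h)
    have hyt : y ∈ t.support := htsupp.mem_iff.mpr hys
    set f : G.Walk x w' := t.concat hadjyw' with hf
    have hfpath : f.IsPath := by
      rw [isPath_def, hf, Walk.support_concat]
      rw [List.nodup_append]
      refine ⟨htpath.support_nodup, List.nodup_singleton _, ?_⟩
      intro z hz z' hz' hzz'
      simp at hz'
      exact hw't (by rw [← hz', ← hzz']; exact hz)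
    have hflen : f.length = p.length + 1 := by
      rw [hf, Walk.length_concat]
      have h1 := t.length_support
      have h2 := p.length_support
      have h3 := htsupp.length_eq
      omega
    have := hmax _ _ f hfpath
    omega

lemma degree_induce_le (G : SimpleGraph V) [DecidableRel G.Adj] (s : Set V) [Fintype ↥s]
    [hdr : DecidableRel (G.induce s).Adj] (v : ↥s) :
    G.degree ↑v ≤ (G.induce s).degree v + (Fintype.card V - Fintype.card ↥s) := by
  classical
  have h1 : G.neighborFinset ↑v ∩ s.toFinset ⊆ ((G.induce s).neighborFinset v).image
      Subtype.val := by
    intro x hx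
    rw [Finset.mem_inter, mem_neighborFinset, Set.mem_toFinset] at hx
    refine Finset.mem_image.mpr ⟨⟨x, hx.2⟩, ?_, rfl⟩
    rw [mem_neighborFinset]
    exact hx.1
  have h2 : (G.neighborFinset ↑v ∩ s.toFinset).card ≤ (G.induce s).degree v := by
    calc (G.neighborFinset ↑v ∩ s.toFinset).card
        ≤ (((G.induce s).neighborFinset v).image Subtype.val).card := Finset.card_le_card h1
      _ ≤ ((G.induce s).neighborFinset v).card := Finset.card_image_le
      _ = (G.induce s).degree v := card_neighborFinset_eq_degree _ _
  have h3 : (G.neighborFinset ↑v \ s.toFinset).card ≤ Fintype.card V - Fintype.card ↥s := by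
    calc (G.neighborFinset ↑v \ s.toFinset).card
        ≤ (Finset.univ \ s.toFinset).card :=
          Finset.card_le_card (Finset.sdiff_subset_sdiff (Finset.subset_univ _) le_rfl)
      _ = Fintype.card V - s.toFinset.card := by
          rw [Finset.sdiff_eq_inter_compl, Finset.univ_inter, Finset.card_compl]
      _ = Fintype.card V - Fintype.card ↥s := by rw [Set.toFinset_card]
  have h4 : G.degree ↑v = (G.neighborFinset ↑v ∩ s.toFinset).card
      + (G.neighborFinset ↑v \ s.toFinset).card := by
    rw [← card_neighborFinset_eq_degree, Finset.card_inter_add_card_sdiff]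
  omega

open SimpleGraph.Walk in
/-- Dirac-type: Hamiltonian connectedness with slack. -/
lemma exists_ham_path_between (G : SimpleGraph V) [DecidableRel G.Adj]
    (hdeg : ∀ v : V, Fintype.card V + 8 ≤ 2 * G.degree v) (a b : V) (hab : a ≠ b) :
    ∃ q : G.Walk a b, q.IsPath ∧ ∀ v, v ∈ q.support := by
  classical
  have hNbig : 10 ≤ Fintype.card V := by
    have h1 := hdeg a
    have h2 := G.degree_lt_card_verts a
    omega
  set s : Set V := {a, b}ᶜ with hs
  haveI : Fintype ↥s := Fintype.ofFinite ↥s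
  have hcards : Fintype.card ↥s = Fintype.card V - 2 := by
    have h1 : s.toFinset = ({a, b} : Finset V)ᶜ := by
      ext x
      simp [hs]
    have h2 := Set.toFinset_card s
    rw [h1, Finset.card_compl, Finset.card_pair hab] at h2
    omega
  set H : SimpleGraph ↥s := G.induce s with hH
  haveI : DecidableRel H.Adj := fun x y => ‹DecidableRel G.Adj› ↑x ↑y
  have hdeg' : ∀ v : ↥s, Fintype.card ↥s + 2 ≤ 2 * H.degree v := by
    intro v
    have h1 := degree_induce_le G s (hdr := ‹DecidableRel H.Adj›) v
    have h2 := hdeg ↑v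
    have he : (G.induce s).degree v = H.degree v := by
      unfold SimpleGraph.degree
      congr!
    rw [he] at h1
    omega
  obtain ⟨u, z, q0, hq0, hq0span, hadjzu⟩ := exists_ham_path_adj H (by omega) hdeg'
  set ι : H →g G := ⟨Subtype.val, fun h => h⟩ with hι
  set q1 : G.Walk ↑u ↑z := q0.map ι with hq1
  have hq1path : q1.IsPath := q0.map_isPath_of_injective Subtype.val_injective hq0
  have hq1suppiff : ∀ x : V, x ∈ q1.support ↔ x ∈ s := by
    intro x
    rw [hq1, Walk.support_map]
    constructor
    · rintro hx
      obtain ⟨y, _, rfl⟩ := List.mem_map.mp hx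
      exact y.2
    · intro hx
      exact List.mem_map.mpr ⟨⟨x, hx⟩, hq0span _, rfl⟩
  have hq1len : q1.support.length = Fintype.card ↥s := by
    have h1 : q1.support.length = q0.support.length := by
      rw [hq1, Walk.support_map, List.length_map]
    have h2 : q0.support.toFinset = Finset.univ := by
      ext x; simp [hq0span x]
    have h3 := List.toFinset_card_of_nodup hq0.support_nodup
    rw [h2, Finset.card_univ] at h3
    omega
  have hazu : G.Adj ↑z ↑u := hadjzu
  set c : G.Walk ↑u ↑u := q1.concat hazu with hc
  have hcsupp : c.support = q1.support ++ [(↑u : V)] := by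
    rw [hc, Walk.support_concat]
  have hcnd : c.darts.Nodup := by
    have h1 : (c.darts.map (·.fst)).Nodup := by
      rw [Walk.map_fst_darts, hcsupp, List.dropLast_concat]
      exact hq1path.support_nodup
    exact List.Nodup.of_map _ h1
  set D : Finset G.Dart := c.darts.toFinset with hD
  have hDcard : D.card = Fintype.card V - 2 := by
    rw [hD, List.toFinset_card_of_nodup hcnd, Walk.length_darts, hc, Walk.length_concat]
    have := q1.length_support
    omega
  set Sa : Finset G.Dart := D.filter (fun d => G.Adj a d.fst) with hSa
  set Sb : Finset G.Dart := D.filter (fun d => G.Adj b d.snd) with hSb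
  have hfst_mem : ∀ w : V, w ∈ s → ∃ d ∈ c.darts, d.fst = w := by
    intro w hw
    have : w ∈ q1.support := (hq1suppiff w).mpr hw
    have : w ∈ c.darts.map (·.fst) := by
      rw [Walk.map_fst_darts, hcsupp, List.dropLast_concat]
      exact this
    obtain ⟨d, hd, hdw⟩ := List.mem_map.mp this
    exact ⟨d, hd, hdw⟩
  have hsnd_mem : ∀ w : V, w ∈ s → ∃ d ∈ c.darts, d.snd = w := by
    intro w hw
    have h1 : w ∈ q1.support := (hq1suppiff w).mpr hw
    have h2 : w ∈ c.support.tail := by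
      rw [hcsupp, q1.support_eq_cons, List.cons_append, List.tail_cons]
      rw [q1.support_eq_cons] at h1
      rcases List.mem_cons.mp h1 with rfl | h
      · exact List.mem_append_right _ (List.mem_singleton_self _)
      · exact List.mem_append_left _ h
    rw [← Walk.map_snd_darts] at h2
    obtain ⟨d, hd, hdw⟩ := List.mem_map.mp h2
    exact ⟨d, hd, hdw⟩
  have hSacard : G.degree a - 1 ≤ Sa.card := by
    have h1 : G.neighborFinset a \ {b} ⊆ Sa.image (·.fst) := by
      intro w hw
      rw [Finset.mem_sdiff, mem_neighborFinset, Finset.mem_singleton] at hw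
      have hwa : w ≠ a := fun h => G.irrefl (h ▸ hw.1)
      have hws : w ∈ s := by simp [hs, hwa, hw.2]
      obtain ⟨d, hd, hdw⟩ := hfst_mem w hws
      refine Finset.mem_image.mpr ⟨d, ?_, hdw⟩
      rw [hSa, Finset.mem_filter, hD, List.mem_toFinset]
      exact ⟨hd, hdw ▸ hw.1⟩
    calc G.degree a - 1 ≤ (G.neighborFinset a \ {b}).card := by
          have h3 : (G.neighborFinset a).card = G.degree a := card_neighborFinset_eq_degree _ _
          have h4 : G.neighborFinset a ⊆ (G.neighborFinset a \ {b}) ∪ {b} := by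
            intro x hx
            rw [Finset.mem_union, Finset.mem_sdiff, Finset.mem_singleton]
            by_cases hxb : x = b
            · right; exact hxb
            · left; exact ⟨hx, hxb⟩
          have h5 := Finset.card_le_card h4
          have h6 := Finset.card_union_le (G.neighborFinset a \ {b}) {b}
          simp only [Finset.card_singleton] at h6
          omega
      _ ≤ (Sa.image (·.fst)).card := Finset.card_le_card h1
      _ ≤ Sa.card := Finset.card_image_le
  have hSbcard : G.degree b - 1 ≤ Sb.card := by
    have h1 : G.neighborFinset b \ {a} ⊆ Sb.image (·.snd) := by
      intro w hw
      rw [Finset.mem_sdiff, mem_neighborFinset, Finset.mem_singleton] at hw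
      have hwb : w ≠ b := fun h => G.irrefl (h ▸ hw.1)
      have hws : w ∈ s := by simp [hs, hwb, hw.2]
      obtain ⟨d, hd, hdw⟩ := hsnd_mem w hws
      refine Finset.mem_image.mpr ⟨d, ?_, hdw⟩
      rw [hSb, Finset.mem_filter, hD, List.mem_toFinset]
      exact ⟨hd, hdw ▸ hw.1⟩
    calc G.degree b - 1 ≤ (G.neighborFinset b \ {a}).card := by
          have h3 : (G.neighborFinset b).card = G.degree b := card_neighborFinset_eq_degree _ _
          have h4 : G.neighborFinset b ⊆ (G.neighborFinset b \ {a}) ∪ {a} := by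
            intro x hx
            rw [Finset.mem_union, Finset.mem_sdiff, Finset.mem_singleton]
            by_cases hxa : x = a
            · right; exact hxa
            · left; exact ⟨hx, hxa⟩
          have h5 := Finset.card_le_card h4
          have h6 := Finset.card_union_le (G.neighborFinset b \ {a}) {a}
          simp only [Finset.card_singleton] at h6
          omega
      _ ≤ (Sb.image (·.snd)).card := Finset.card_le_card h1
      _ ≤ Sb.card := Finset.card_image_le
  have hinter : (Sa ∩ Sb).Nonempty := by
    rw [← Finset.card_pos]
    have h1 : (Sa ∩ Sb).card + (Sa ∪ Sb).card = Sa.card + Sb.card :=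
      Finset.card_inter_add_card_union Sa Sb
    have h2 : (Sa ∪ Sb).card ≤ D.card := Finset.card_le_card
      (Finset.union_subset (Finset.filter_subset _ _) (Finset.filter_subset _ _))
    have h3 := hdeg a
    have h4 := hdeg b
    omega
  obtain ⟨d, hd⟩ := hinter
  rw [Finset.mem_inter, hSa, hSb, Finset.mem_filter, Finset.mem_filter, hD,
    List.mem_toFinset] at hd
  obtain ⟨⟨hdm, hadjaf⟩, -, hadjbs⟩ := hd
  obtain ⟨c1, c2, hsplit⟩ := walk_split_at_dart c d hdm
  -- the Hamiltonian a-b path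
  set inner : G.Walk d.fst d.snd := c1.reverse.append c2.reverse with hinner
  set full : G.Walk a b := Walk.cons hadjaf (inner.concat hadjbs.symm) with hfull
  have hc2last : c2.support = c2.support.dropLast ++ [(↑u : V)] := by
    conv_lhs => rw [← List.dropLast_append_getLast (c2.support_ne_nil)]
    rw [c2.getLast_support]
  have hX : c1.support ++ c2.support.dropLast = q1.support := by
    have h1 : c.support = c1.support ++ c2.support := by
      rw [hsplit, Walk.support_append, Walk.support_cons, List.tail_cons]
    rw [hcsupp, hc2last] at h1
    rw [← List.append_assoc] at h1
    exact List.append_cancel_right h1.symm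
  have hfullsupp : full.support.Perm (a :: b :: q1.support) := by
    have e1 : full.support
        = a :: (c1.support.reverse ++ c2.support.dropLast.reverse ++ [b]) := by
      rw [hfull, Walk.support_cons, Walk.support_concat, hinner, Walk.support_append,
        Walk.support_reverse, Walk.support_reverse, List.tail_reverse]
    rw [e1]
    refine List.Perm.cons _ ?_
    refine (List.perm_append_comm).trans ?_
    have h2 : (c1.support.reverse ++ c2.support.dropLast.reverse).Perm q1.support := by
      rw [← hX]
      exact (c1.support.reverse_perm).append (c2.support.dropLast.reverse_perm)
    exact h2.cons b
  have hnotin : a ∉ q1.support ∧ b ∉ q1.support := by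
    constructor
    · intro h
      have := (hq1suppiff a).mp h
      simp [hs] at this
    · intro h
      have := (hq1suppiff b).mp h
      simp [hs] at this
  have hfullpath : full.IsPath := by
    rw [Walk.isPath_def]
    refine hfullsupp.nodup_iff.mpr ?_
    refine List.nodup_cons.mpr ⟨?_, List.nodup_cons.mpr ⟨hnotin.2, hq1path.support_nodup⟩⟩
    simp only [List.mem_cons]
    rintro (rfl | h)
    · exact hab rfl
    · exact hnotin.1 h
  refine ⟨full, hfullpath, fun v => ?_⟩
  rw [hfullsupp.mem_iff]
  by_cases hva : v = a
  · simp [hva]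
  by_cases hvb : v = b
  · simp [hvb]
  have : v ∈ s := by simp [hs, hva, hvb]
  simp [(hq1suppiff v).mpr this]

/-- Greedy choice of distinct representatives avoiding a forbidden set. -/
lemma exists_greedy_choice {V ι : Type} [DecidableEq V] [DecidableEq ι] [Nonempty V]
    (S : ι → Finset V) :
    ∀ (P : Finset ι) (F : Finset V), (∀ p ∈ P, F.card + P.card ≤ (S p).card) →
    ∃ f : ι → V, Set.InjOn f ↑P ∧ ∀ p ∈ P, f p ∈ S p ∧ f p ∉ F := by
  intro P
  induction P using Finset.induction_on with
  | empty =>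
    intro F _
    exact ⟨fun _ => Classical.arbitrary V, by simp [Set.InjOn], by simp⟩
  | @insert a P ha ih =>
    intro F hcard
    have h1 : F.card < (S a).card := by
      have := hcard a (Finset.mem_insert_self a P)
      have h2 := Finset.card_insert_of_notMem ha
      omega
    have h2 : (S a \ F).Nonempty := by
      rw [← Finset.card_pos]
      have := Finset.le_card_sdiff F (S a)
      have h3 : (S a \ F).card ≥ (S a).card - F.card := by
        have h4 := Finset.card_le_card_sdiff_add_card (s := S a) (t := F)
        omega
      omega
    obtain ⟨v, hv⟩ := h2
    rw [Finset.mem_sdiff] at hv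
    obtain ⟨f, hfi, hfm⟩ := ih (insert v F) (by
      intro p hp
      have := hcard p (Finset.mem_insert_of_mem hp)
      have h3 := Finset.card_insert_le v F
      have h4 := Finset.card_insert_of_notMem ha
      omega)
    refine ⟨Function.update f a v, ?_, ?_⟩
    · intro x hx y hy hxy
      simp only [Finset.coe_insert, Set.mem_insert_iff, Finset.mem_coe] at hx hy
      rcases hx with rfl | hx <;> rcases hy with rfl | hy
      · rfl
      · have hyne : y ≠ x := fun h => ha (by rwa [h] at hy)
        rw [Function.update_self, Function.update_of_ne hyne] at hxy
        have hne : f y ≠ v := fun h => (hfm y hy).2 (by rw [h]; exact Finset.mem_insert_self v F)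
        exact absurd hxy.symm hne
      · have hxne : x ≠ y := fun h => ha (by rwa [h] at hx)
        rw [Function.update_self, Function.update_of_ne hxne] at hxy
        have hne : f x ≠ v := fun h => (hfm x hx).2 (by rw [h]; exact Finset.mem_insert_self v F)
        exact absurd hxy hne
      · have hxne : x ≠ a := fun h => ha (by rwa [h] at hx)
        have hyne : y ≠ a := fun h => ha (by rwa [h] at hy)
        rw [Function.update_of_ne hxne, Function.update_of_ne hyne] at hxy
        exact hfi hx hy hxy
    · intro p hp
      rcases Finset.mem_insert.mp hp with rfl | hp
      · rw [Function.update_self]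
        exact ⟨hv.1, hv.2⟩
      · have hpne : p ≠ a := fun h => ha (by rwa [h] at hp)
        rw [Function.update_of_ne hpne]
        have := hfm p hp
        exact ⟨this.1, fun h => this.2 (Finset.mem_insert_of_mem h)⟩
end Aux

def castWalk {V : Type} {G : SimpleGraph V} {u v u' v' : V} (hu : u = u') (hv : v = v')
    (p : G.Walk u v) : G.Walk u' v' := hu ▸ hv ▸ p

lemma castWalk_self {V : Type} {G : SimpleGraph V} {u v : V} (hu : u = u) (hv : v = v)
    (p : G.Walk u v) : castWalk hu hv p = p := rfl

def twoStep {V : Type} {G : SimpleGraph V} {x y z : V} (h1 : G.Adj x y) (h2 : G.Adj y z) :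
    G.Walk x z := SimpleGraph.Walk.cons h1 (SimpleGraph.Walk.cons h2 SimpleGraph.Walk.nil)

lemma twoStep_supp {V : Type} {G : SimpleGraph V} {x y z : V} (h1 : G.Adj x y)
    (h2 : G.Adj y z) : (twoStep h1 h2).support = [x, y, z] := rfl

lemma twoStep_path {V : Type} {G : SimpleGraph V} {x y z : V} (h1 : G.Adj x y)
    (h2 : G.Adj y z) (hxy : x ≠ y) (hxz : x ≠ z) (hyz : y ≠ z) :
    (twoStep h1 h2).IsPath := by
  rw [SimpleGraph.Walk.isPath_def, twoStep_supp]
  simp [hxy, hxz, hyz]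

lemma sym2_sorted_eq {n : ℕ} {i j k l : Fin n} (hij : i < j) (hkl : k < l)
    (h : s(i, j) = s(k, l)) : i = k ∧ j = l := by
  rw [Sym2.eq_iff] at h
  rcases h with ⟨rfl, rfl⟩ | ⟨rfl, rfl⟩
  · exact ⟨rfl, rfl⟩
  · exact absurd (hij.trans hkl) (lt_irrefl _)

/-- `IsSpanningSubdivisionWith G H f` says that `G` contains a spanning subdivision of `H`
whose branch vertices are given by the injective map `f`: for every edge `ij` of `H` there
is a path in `G` from `f i` to `f j`, these paths are pairwise internally disjoint, their
interiors avoid all branch vertices, and together they cover every vertex of `G`. -/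
def IsSpanningSubdivisionWith {V W : Type*} (G : SimpleGraph V) (H : SimpleGraph W)
    (f : W → V) : Prop :=
  Function.Injective f ∧
  ∃ P : ∀ i j : W, H.Adj i j → G.Walk (f i) (f j),
    (∀ i j (h : H.Adj i j), (P i j h).IsPath) ∧
    (∀ i j (h : H.Adj i j), P j i h.symm = (P i j h).reverse) ∧
    (∀ i j k l (h : H.Adj i j) (h' : H.Adj k l), s(i, j) ≠ s(k, l) →
      ∀ x, x ∈ (P i j h).support → x ∈ (P k l h').support →
        (x = f i ∨ x = f j) ∧ (x = f k ∨ x = f l)) ∧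
    (∀ i j (h : H.Adj i j) (k : W), f k ∈ (P i j h).support → k = i ∨ k = j) ∧
    (∀ x : V, (∃ i j, ∃ h : H.Adj i j, x ∈ (P i j h).support) ∨ ∃ i, x = f i)

/-- `G` contains a spanning subdivision of `H`. -/
def IsSpanningSubdivisionIn {V W : Type*} (G : SimpleGraph V) (H : SimpleGraph W) : Prop :=
  ∃ f : W → V, IsSpanningSubdivisionWith G H f

/-- Assembly of a spanning subdivision from branch vertices, midpoints and one long path. -/
lemma assemble {V : Type} (G : SimpleGraph V) {n : ℕ}
    (i0 i1 : Fin n) (hi01 : i0 ≠ i1)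
    (b : Fin n → V) (hbinj : Function.Injective b)
    (m : Fin n → Fin n → V)
    (hmadj : ∀ i j, i < j → s(i, j) ≠ s(i0, i1) →
      G.Adj (b i) (m i j) ∧ G.Adj (m i j) (b j))
    (hmnotb : ∀ i j, i < j → s(i, j) ≠ s(i0, i1) → ∀ k, m i j ≠ b k)
    (hminj : ∀ i j k l, i < j → s(i, j) ≠ s(i0, i1) → k < l → s(k, l) ≠ s(i0, i1) →
      s(i, j) ≠ s(k, l) → m i j ≠ m k l)
    (Q : G.Walk (b i0) (b i1)) (hQ : Q.IsPath)
    (hQsupp : ∀ x, x ∈ Q.support ↔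
      ((∀ i j, i < j → s(i, j) ≠ s(i0, i1) → x ≠ m i j) ∧
        (∀ k, k ≠ i0 → k ≠ i1 → x ≠ b k))) :
    IsSpanningSubdivisionIn G (completeGraph (Fin n)) := by
  classical
  -- basic facts
  have hadj_ne : ∀ {i j : Fin n}, (completeGraph (Fin n)).Adj i j → i ≠ j := by
    intro i j h
    simpa using h
  have hQb0 : b i0 ∈ Q.support := Q.start_mem_support
  have hQb1 : b i1 ∈ Q.support := Q.end_mem_support
  have tp_path : ∀ (i j : Fin n) (hij : i < j) (hs : s(i, j) ≠ s(i0, i1)),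
      (twoStep (hmadj i j hij hs).1 (hmadj i j hij hs).2).IsPath := by
    intro i j hij hs
    refine twoStep_path _ _ ?_ ?_ ?_
    · exact fun h => (hmnotb i j hij hs i) h.symm
    · exact fun h => (Fin.ne_of_lt hij) (hbinj h)
    · exact hmnotb i j hij hs j
  -- non-special pairs give s ≠ s(i0,i1)
  have hsne : ∀ {i j : Fin n}, i ≠ j → ¬(i = i0 ∧ j = i1) → ¬(i = i1 ∧ j = i0) →
      s(i, j) ≠ s(i0, i1) := by
    intro i j hij h1 h2 hs
    rw [Sym2.eq_iff] at hs
    rcases hs with ⟨rfl, rfl⟩ | ⟨rfl, rfl⟩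
    · exact h1 ⟨rfl, rfl⟩
    · exact h2 ⟨rfl, rfl⟩
  -- definition of the path system
  set P : ∀ i j : Fin n, (completeGraph (Fin n)).Adj i j → G.Walk (b i) (b j) :=
    fun i j h =>
      if h1 : i = i0 ∧ j = i1 then
        castWalk (congrArg b h1.1.symm) (congrArg b h1.2.symm) Q
      else if h2 : i = i1 ∧ j = i0 then
        castWalk (congrArg b h2.1.symm) (congrArg b h2.2.symm) Q.reverse
      else if h3 : i < j then
        twoStep (hmadj i j h3 (hsne (hadj_ne h) h1 h2)).1
          (hmadj i j h3 (hsne (hadj_ne h) h1 h2)).2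
      else
        (twoStep
          (hmadj j i (lt_of_le_of_ne (not_lt.mp h3) (hadj_ne h).symm)
            (fun hs => (hsne (hadj_ne h) h1 h2) (by rw [Sym2.eq_iff] at hs ⊢; tauto))).1
          (hmadj j i (lt_of_le_of_ne (not_lt.mp h3) (hadj_ne h).symm)
            (fun hs => (hsne (hadj_ne h) h1 h2) (by rw [Sym2.eq_iff] at hs ⊢; tauto))).2).reverse
    with hP
  -- support characterizations
  have hPs : ∀ (i j : Fin n) (h : (completeGraph (Fin n)).Adj i j),
      (s(i, j) = s(i0, i1) ∧ ∀ x, x ∈ (P i j h).support ↔ x ∈ Q.support) ∨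
      (s(i, j) ≠ s(i0, i1) ∧ ∃ (a' b' : Fin n) (ha' : a' < b') (hs' : s(a', b') ≠ s(i0, i1)),
        s(a', b') = s(i, j) ∧
        ∀ x, x ∈ (P i j h).support ↔ (x = b i ∨ x = m a' b' ∨ x = b j)) := by
    intro i j h
    by_cases h1 : i = i0 ∧ j = i1
    · obtain ⟨rfl, rfl⟩ := h1
      left
      refine ⟨rfl, fun x => ?_⟩
      simp only [hP]
      have hc1 : True ∧ True := ⟨trivial, trivial⟩
      rw [dif_pos hc1, castWalk_self]
    · by_cases h2 : i = i1 ∧ j = i0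
      · obtain ⟨rfl, rfl⟩ := h2
        left
        refine ⟨by rw [Sym2.eq_iff]; tauto, fun x => ?_⟩
        simp only [hP]
        have hc1 : ¬(i = j ∧ j = i) := fun hc => hi01 hc.2
        have hc2 : True ∧ True := ⟨trivial, trivial⟩
        rw [dif_neg hc1, dif_pos hc2, castWalk_self, Walk.support_reverse]
        simp
      · right
        have hij := hadj_ne h
        refine ⟨hsne hij h1 h2, ?_⟩
        by_cases h3 : i < j
        · refine ⟨i, j, h3, hsne hij h1 h2, rfl, fun x => ?_⟩
          simp only [hP]
          rw [dif_neg h1, dif_neg h2, dif_pos h3, twoStep_supp]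
          simp
        · have h4 : j < i := lt_of_le_of_ne (not_lt.mp h3) hij.symm
          refine ⟨j, i, h4, fun hs => (hsne hij h1 h2)
            (by rw [Sym2.eq_iff] at hs ⊢; tauto), by rw [Sym2.eq_iff]; tauto, fun x => ?_⟩
          simp only [hP]
          rw [dif_neg h1, dif_neg h2, dif_neg h3, Walk.support_reverse, List.mem_reverse,
            twoStep_supp]
          simp
          tauto
  -- the result
  refine ⟨b, hbinj, P, ?_, ?_, ?_, ?_, ?_⟩
  · -- paths
    intro i j h
    by_cases h1 : i = i0 ∧ j = i1
    · obtain ⟨rfl, rfl⟩ := h1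
      simp only [hP]
      have hc1 : True ∧ True := ⟨trivial, trivial⟩
      rw [dif_pos hc1, castWalk_self]
      exact hQ
    · by_cases h2 : i = i1 ∧ j = i0
      · obtain ⟨rfl, rfl⟩ := h2
        simp only [hP]
        have hc1 : ¬(i = j ∧ j = i) := fun hc => hi01 hc.2
        have hc2 : True ∧ True := ⟨trivial, trivial⟩
        rw [dif_neg hc1, dif_pos hc2, castWalk_self]
        exact hQ.reverse
      · simp only [hP]
        have hij := hadj_ne h
        by_cases h3 : i < j
        · rw [dif_neg h1, dif_neg h2, dif_pos h3]
          exact tp_path i j h3 (hsne hij h1 h2)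
        · rw [dif_neg h1, dif_neg h2, dif_neg h3]
          have h4 : j < i := lt_of_le_of_ne (not_lt.mp h3) hij.symm
          have hs4 : s(j, i) ≠ s(i0, i1) := fun hs => (hsne hij h1 h2)
            (by rw [Sym2.eq_iff] at hs ⊢; tauto)
          exact (tp_path j i h4 hs4).reverse

  · -- reversal
    intro i j h
    have hij := hadj_ne h
    by_cases h1 : i = i0 ∧ j = i1
    · obtain ⟨rfl, rfl⟩ := h1
      simp only [hP]
      have hc1 : ¬(j = i ∧ i = j) := fun hc => hij hc.2
      have hc2 : True ∧ True := ⟨trivial, trivial⟩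
      rw [dif_neg hc1, dif_pos hc2, dif_pos hc2, castWalk_self, castWalk_self]
    · by_cases h2 : i = i1 ∧ j = i0
      · obtain ⟨rfl, rfl⟩ := h2
        simp only [hP]
        have hc1 : True ∧ True := ⟨trivial, trivial⟩
        have hc1' : ¬(i = j ∧ j = i) := fun hc => hij hc.1
        rw [dif_pos hc1, dif_neg hc1', dif_pos hc1, castWalk_self, castWalk_self,
          Walk.reverse_reverse]
      · simp only [hP]
        have h1' : ¬(j = i0 ∧ i = i1) := fun hc => h2 ⟨hc.2, hc.1⟩
        have h2' : ¬(j = i1 ∧ i = i0) := fun hc => h1 ⟨hc.2, hc.1⟩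
        by_cases h3 : i < j
        · have h3' : ¬ j < i := by simp [not_lt, le_of_lt h3]
          rw [dif_neg h1', dif_neg h2', dif_neg h3', dif_neg h1, dif_neg h2, dif_pos h3]
        · have h4 : j < i := lt_of_le_of_ne (not_lt.mp h3) hij.symm
          rw [dif_neg h1', dif_neg h2', dif_pos h4, dif_neg h1, dif_neg h2, dif_neg h3,
            Walk.reverse_reverse]
  · -- internal disjointness
    intro i j k l h h' hne x hx hx'
    rcases hPs i j h with ⟨hsij, hiff⟩ | ⟨hsij, a', b', ha', hs', heq, hiff⟩ <;>
      rcases hPs k l h' with ⟨hskl, hiff'⟩ | ⟨hskl, a'', b'', ha'', hs'', heq', hiff'⟩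
    · exact absurd (hsij.trans hskl.symm) hne
    · -- (i,j) special, (k,l) two-path
      rw [hiff x] at hx
      rw [hiff' x] at hx'
      have hxQ := (hQsupp x).mp hx
      have hxm : x ≠ m a'' b'' := hxQ.1 a'' b'' ha'' hs''
      have hxkl : x = b k ∨ x = b l := by tauto
      constructor
      · -- x = b i ∨ x = b j from being a branch vertex on Q
        have : ∃ k', x = b k' := by
          rcases hxkl with h | h
          · exact ⟨k, h⟩
          · exact ⟨l, h⟩
        obtain ⟨k', rfl⟩ := this
        have hk' : k' = i0 ∨ k' = i1 := by
          by_contra hc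
          push_neg at hc
          exact hxQ.2 k' hc.1 hc.2 rfl
        rw [Sym2.eq_iff] at hsij
        rcases hsij with ⟨rfl, rfl⟩ | ⟨rfl, rfl⟩ <;> rcases hk' with rfl | rfl <;> tauto
      · exact hxkl
    · -- (i,j) two-path, (k,l) special : symmetric
      rw [hiff x] at hx
      rw [hiff' x] at hx'
      have hxQ := (hQsupp x).mp hx'
      have hxm : x ≠ m a' b' := hxQ.1 a' b' ha' hs'
      have hxij : x = b i ∨ x = b j := by tauto
      refine ⟨hxij, ?_⟩
      have : ∃ k', x = b k' := by
        rcases hxij with h | h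
        · exact ⟨i, h⟩
        · exact ⟨j, h⟩
      obtain ⟨k', rfl⟩ := this
      have hk' : k' = i0 ∨ k' = i1 := by
        by_contra hc
        push_neg at hc
        exact hxQ.2 k' hc.1 hc.2 rfl
      rw [Sym2.eq_iff] at hskl
      rcases hskl with ⟨rfl, rfl⟩ | ⟨rfl, rfl⟩ <;> rcases hk' with rfl | rfl <;> tauto
    · -- both two-paths
      rw [hiff x] at hx
      rw [hiff' x] at hx'
      have hmm : m a' b' ≠ m a'' b'' := by
        apply hminj _ _ _ _ ha' hs' ha'' hs''
        rw [heq, heq']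
        exact hne
      have hm1 : x = m a' b' → False := by
        intro hxm
        rcases hx' with h | h | h
        · exact hmnotb a' b' ha' hs' k (by rw [← hxm]; exact h)
        · exact hmm (by rw [← hxm]; exact h)
        · exact hmnotb a' b' ha' hs' l (by rw [← hxm]; exact h)
      have hm2 : x = m a'' b'' → False := by
        intro hxm
        rcases hx with h | h | h
        · exact hmnotb a'' b'' ha'' hs'' i (by rw [← hxm]; exact h)
        · exact hmm ((by rw [← hxm]; exact h : m a'' b'' = m a' b').symm)
        · exact hmnotb a'' b'' ha'' hs'' j (by rw [← hxm]; exact h)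
      constructor
      · rcases hx with h | h | h
        · exact Or.inl h
        · exact absurd h hm1
        · exact Or.inr h
      · rcases hx' with h | h | h
        · exact Or.inl h
        · exact absurd h hm2
        · exact Or.inr h
  · -- branch vertices only at endpoints
    intro i j h k hk
    rcases hPs i j h with ⟨hsij, hiff⟩ | ⟨hsij, a', b', ha', hs', heq, hiff⟩
    · rw [hiff] at hk
      have hxQ := (hQsupp (b k)).mp hk
      have hk' : k = i0 ∨ k = i1 := by
        by_contra hc
        push_neg at hc
        exact hxQ.2 k hc.1 hc.2 rfl
      rw [Sym2.eq_iff] at hsij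
      rcases hsij with ⟨rfl, rfl⟩ | ⟨rfl, rfl⟩ <;> rcases hk' with rfl | rfl <;> tauto
    · rw [hiff] at hk
      rcases hk with h' | h' | h'
      · exact Or.inl (hbinj h')
      · exact absurd h'.symm (hmnotb a' b' ha' hs' k)
      · exact Or.inr (hbinj h')
  · -- coverage
    intro x
    by_cases hxQ : x ∈ Q.support
    · left
      have hadj : (completeGraph (Fin n)).Adj i0 i1 := by simpa using hi01
      refine ⟨i0, i1, hadj, ?_⟩
      rcases hPs i0 i1 hadj with ⟨_, hiff⟩ | ⟨hs, _⟩
      · rw [hiff]; exact hxQ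
      · exact absurd rfl hs
    · rw [hQsupp, not_and_or] at hxQ
      push_neg at hxQ
      rcases hxQ with ⟨i, j, hij, hs, rfl⟩ | ⟨k, hk0, hk1, rfl⟩
      · left
        have hadj : (completeGraph (Fin n)).Adj i j := by
          simpa using Fin.ne_of_lt hij
        refine ⟨i, j, hadj, ?_⟩
        rcases hPs i j hadj with ⟨hs', _⟩ | ⟨_, a', b', ha', hs', heq, hiff⟩
        · exact absurd hs' hs
        · rw [hiff]
          right; left
          obtain ⟨rfl, rfl⟩ := sym2_sorted_eq ha' hij heq
          rfl
      · exact Or.inr ⟨k, rfl⟩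

/-- For every `ε > 0` there is `C₀` such that for all `C ≥ C₀` and `n ≥ 2`, every graph
on `N = C·n·(n-1)` vertices with minimum degree at least `(1+ε)N/2` contains a spanning
subdivision of the complete graph `K_n`. -/
theorem spanning_clique_subdivision :
    ∀ ε : ℝ, 0 < ε → ∃ C₀ : ℕ, 0 < C₀ ∧ ∀ C : ℕ, C₀ ≤ C → ∀ n : ℕ, 2 ≤ n →
      ∀ (V : Type) [Fintype V] (G : SimpleGraph V) [DecidableRel G.Adj],
        Fintype.card V = C * n * (n - 1) →
        (∀ v : V, (1 + ε) * (Fintype.card V : ℝ) / 2 ≤ (G.degree v : ℝ)) →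
        IsSpanningSubdivisionIn G (completeGraph (Fin n)) := by

  intro ε hε
  refine ⟨⌈(8 : ℝ) / ε⌉₊ + 1, Nat.succ_pos _, ?_⟩
  intro C hC n hn V _ G _ hcard hdeg
  classical
  set N := Fintype.card V with hN
  set T := n * (n - 1) with hT
  have hT2 : 2 ≤ T := by
    have : 1 ≤ n - 1 := by omega
    calc 2 ≤ n * 1 := by omega
    _ ≤ n * (n - 1) := by exact Nat.mul_le_mul_left n this
  have hnT : n ≤ T := by
    calc n = n * 1 := (Nat.mul_one n).symm
    _ ≤ n * (n - 1) := Nat.mul_le_mul_left n (by omega)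
  have hC1 : 1 ≤ C := by omega
  have hNT : N = C * T := by rw [hT, ← Nat.mul_assoc]; exact hcard
  -- the key degree bound in ℕ
  have hdegN : ∀ v : V, N + 8 * T ≤ 2 * G.degree v := by
    intro v
    have h1 : (8 : ℝ) ≤ ε * C := by
      have h2 : ((8 : ℝ) / ε) ≤ (⌈(8 : ℝ) / ε⌉₊ : ℝ) := Nat.le_ceil _
      have h3 : ((⌈(8 : ℝ) / ε⌉₊ : ℕ) : ℝ) ≤ (C : ℝ) := by
        exact_mod_cast le_trans (Nat.le_succ _) hC
      have h4 : (8 : ℝ) / ε ≤ (C : ℝ) := le_trans h2 h3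
      calc (8 : ℝ) = ε * (8 / ε) := by field_simp
      _ ≤ ε * C := by nlinarith
    have h5 := hdeg v
    have h6 : (1 + ε) * (N : ℝ) ≤ 2 * (G.degree v : ℝ) := by
      rw [hN]
      nlinarith [hdeg v]
    have h7 : ((N : ℝ) + 8 * (T : ℝ)) ≤ 2 * (G.degree v : ℝ) := by
      have h8 : (N : ℝ) = (C : ℝ) * (T : ℝ) := by exact_mod_cast hNT
      nlinarith [h1, h6, hε.le, show (0:ℝ) ≤ (T:ℝ) from Nat.cast_nonneg T]
    exact_mod_cast h7
  have hNbig : n ≤ N := by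
    calc n ≤ T := hnT
    _ = 1 * T := (Nat.one_mul T).symm
    _ ≤ C * T := Nat.mul_le_mul_right T hC1
    _ = N := hNT.symm
  have hNpos : 0 < N := by omega
  haveI : Nonempty V := Fintype.card_pos_iff.mp hNpos
  -- branch vertices
  obtain ⟨bemb⟩ : Nonempty (Fin n ↪ V) :=
    Function.Embedding.nonempty_of_card_le (by simpa using hNbig)
  set b : Fin n → V := ⇑bemb with hb
  have hbinj : Function.Injective b := bemb.injective
  set i0 : Fin n := ⟨0, by omega⟩ with hi0
  set i1 : Fin n := ⟨1, by omega⟩ with hi1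
  have hi01 : i0 ≠ i1 := by
    intro h
    have := congrArg Fin.val h
    simp [hi0, hi1] at this
  -- midpoints via greedy choice
  set Pr : Finset (Fin n × Fin n) :=
    Finset.univ.filter (fun p => p.1 < p.2 ∧ s(p.1, p.2) ≠ s(i0, i1)) with hPr
  have hPrcard : Pr.card ≤ 2 * T := by
    have h4 : Pr.card ≤ (Finset.univ : Finset (Fin n × Fin n)).card :=
      Finset.card_le_card (Finset.subset_univ _)
    rw [Finset.card_univ, Fintype.card_prod, Fintype.card_fin] at h4
    have h5 : n * n ≤ 2 * T := by
      rw [hT]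
      calc n * n ≤ n * (2 * (n - 1)) := Nat.mul_le_mul_left n (by omega)
      _ = 2 * (n * (n - 1)) := by ring
    omega
  -- the forbidden set : branch vertices
  set F : Finset V := Finset.univ.image b with hF
  have hFcard : F.card ≤ n := by
    calc F.card ≤ (Finset.univ : Finset (Fin n)).card := Finset.card_image_le
    _ = n := by simp
  -- common neighbourhoods are large
  set S : Fin n × Fin n → Finset V :=
    fun p => G.neighborFinset (b p.1) ∩ G.neighborFinset (b p.2) with hS
  have hScard : ∀ p, 8 * T ≤ (S p).card := by
    intro p
    have h1 : (S p).card + (G.neighborFinset (b p.1) ∪ G.neighborFinset (b p.2)).card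
        = G.degree (b p.1) + G.degree (b p.2) := by
      rw [hS, Finset.card_inter_add_card_union, card_neighborFinset_eq_degree,
        card_neighborFinset_eq_degree]
    have h2 : (G.neighborFinset (b p.1) ∪ G.neighborFinset (b p.2)).card ≤ N :=
      Finset.card_le_univ _
    have h3 := hdegN (b p.1)
    have h4 := hdegN (b p.2)
    omega
  -- greedy choice of midpoints
  obtain ⟨f, hfinj, hfmem⟩ := exists_greedy_choice S Pr F (by
    intro p hp
    have := hScard p
    omega)
  set m : Fin n → Fin n → V := fun i j => f (i, j) with hm
  have hmemPr : ∀ i j : Fin n, i < j → s(i, j) ≠ s(i0, i1) → (i, j) ∈ Pr := by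
    intro i j h1 h2
    rw [hPr, Finset.mem_filter]
    exact ⟨Finset.mem_univ _, h1, h2⟩
  have hmadj : ∀ i j, i < j → s(i, j) ≠ s(i0, i1) →
      G.Adj (b i) (m i j) ∧ G.Adj (m i j) (b j) := by
    intro i j h1 h2
    have h3 := (hfmem (i, j) (hmemPr i j h1 h2)).1
    rw [hS, Finset.mem_inter, mem_neighborFinset, mem_neighborFinset] at h3
    exact ⟨h3.1, h3.2.symm⟩
  have hmnotb : ∀ i j, i < j → s(i, j) ≠ s(i0, i1) → ∀ k, m i j ≠ b k := by
    intro i j h1 h2 k hk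
    exact (hfmem (i, j) (hmemPr i j h1 h2)).2 (by
      rw [hF]
      exact Finset.mem_image.mpr ⟨k, Finset.mem_univ _, hk.symm⟩)
  have hminj : ∀ i j k l, i < j → s(i, j) ≠ s(i0, i1) → k < l → s(k, l) ≠ s(i0, i1) →
      s(i, j) ≠ s(k, l) → m i j ≠ m k l := by
    intro i j k l h1 h2 h3 h4 h5 heq
    have h6 := hfinj (Finset.mem_coe.mpr (hmemPr i j h1 h2))
      (Finset.mem_coe.mpr (hmemPr k l h3 h4)) heq
    apply h5
    rw [Prod.ext_iff] at h6
    obtain ⟨h7, h8⟩ := h6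
    simp only at h7 h8
    rw [h7, h8]
  -- the set for the long path
  set s : Set V := {x | (∀ i j : Fin n, i < j → s(i, j) ≠ s(i0, i1) → x ≠ m i j) ∧
    (∀ k : Fin n, k ≠ i0 → k ≠ i1 → x ≠ b k)} with hs
  haveI hsFin : Fintype ↥s := Fintype.ofFinite ↥s
  -- complement of s is small
  have hcompl : ∀ x : V, x ∉ s → x ∈ F ∪ Pr.image f := by
    intro x hx
    rw [hs, Set.mem_setOf_eq, not_and_or] at hx
    rcases hx with hx | hx
    · push_neg at hx
      obtain ⟨i, j, h1, h2, h3⟩ := hx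
      apply Finset.mem_union_right
      exact Finset.mem_image.mpr ⟨(i, j), hmemPr i j h1 h2, h3.symm⟩
    · push_neg at hx
      obtain ⟨k, _, _, h3⟩ := hx
      apply Finset.mem_union_left
      rw [hF]
      exact Finset.mem_image.mpr ⟨k, Finset.mem_univ _, h3.symm⟩
  have hscard : N ≤ Fintype.card ↥s + 3 * T := by
    have h1 : s.toFinsetᶜ ⊆ F ∪ Pr.image f := by
      intro x hx
      rw [Finset.mem_compl, Set.mem_toFinset] at hx
      exact hcompl x hx
    have h2 := Finset.card_le_card h1
    have h3 : (F ∪ Pr.image f).card ≤ F.card + Pr.card := by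
      calc (F ∪ Pr.image f).card ≤ F.card + (Pr.image f).card := Finset.card_union_le _ _
      _ ≤ F.card + Pr.card := by
          have := Finset.card_image_le (f := f) (s := Pr)
          omega
    have h4 : s.toFinsetᶜ.card = N - s.toFinset.card := by
      rw [Finset.card_compl, hN]
    have h5 : s.toFinset.card = Fintype.card ↥s := Set.toFinset_card s
    have h6 : s.toFinset.card ≤ N := by
      rw [hN]
      exact Finset.card_le_univ _
    omega
  -- the induced graph on s and its Hamiltonian path
  haveI hdrs : DecidableRel (G.induce s).Adj := fun x y => ‹DecidableRel G.Adj› x y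
  have hdegs : ∀ v : ↥s, Fintype.card ↥s + 8 ≤ 2 * (G.induce s).degree v := by
    intro v
    have h1 := degree_induce_le G s v
    have h2 := hdegN ↑v
    have h3 : Fintype.card ↥s ≤ N := by
      rw [hN]
      exact (Set.toFinset_card s) ▸ Finset.card_le_univ _
    have h4 : 8 * T ≥ 6 * T + 4 := by omega
    omega
  have hb0s : b i0 ∈ s := by
    rw [hs, Set.mem_setOf_eq]
    constructor
    · intro i j h1 h2 h3
      exact hmnotb i j h1 h2 i0 h3.symm
    · intro k hk0 _ h3
      exact hk0 (hbinj h3.symm)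
  have hb1s : b i1 ∈ s := by
    rw [hs, Set.mem_setOf_eq]
    constructor
    · intro i j h1 h2 h3
      exact hmnotb i j h1 h2 i1 h3.symm
    · intro k _ hk1 h3
      exact hk1 (hbinj h3.symm)
  have hne01 : (⟨b i0, hb0s⟩ : ↥s) ≠ ⟨b i1, hb1s⟩ := by
    intro h
    rw [Subtype.ext_iff] at h
    exact hi01 (hbinj h)
  obtain ⟨q0, hq0path, hq0span⟩ :=
    exists_ham_path_between (G.induce s) hdegs ⟨b i0, hb0s⟩ ⟨b i1, hb1s⟩ hne01
  -- map the path to G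
  set ι : G.induce s →g G := ⟨Subtype.val, fun h => h⟩ with hι
  set Q : G.Walk (b i0) (b i1) := q0.map ι with hQdef
  have hQpath : Q.IsPath := q0.map_isPath_of_injective Subtype.val_injective hq0path
  have hQsupp : ∀ x : V, x ∈ Q.support ↔ x ∈ s := by
    intro x
    rw [hQdef, Walk.support_map]
    constructor
    · intro hx
      obtain ⟨y, _, rfl⟩ := List.mem_map.mp hx
      exact y.2
    · intro hx
      exact List.mem_map.mpr ⟨⟨x, hx⟩, hq0span _, rfl⟩
  -- assemble
  refine assemble G i0 i1 hi01 b hbinj m hmadj hmnotb hminj Q hQpath ?_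
  intro x
  rw [hQsupp x, hs, Set.mem_setOf_eq]
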